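/- Let n ≥ 2, 1 - 1/n < α₂ < 1 < α₁, u₁(x) = (log(e|x|))^{α₁} and u₂(x) = 1 - (-log|x|)^{α₂} on A = {x ∈ ℝⁿ : 1/e < |x| < 1}, and let r₀ ∈ (1/e, 1) be the unique solution of 1 = (-log r₀)^{α₂} + (log(e r₀))^{α₁}. Then the n-energy of u = min{u₁, u₂} over A equals c_{n-1}·( Q_{α₁,n}(log(e r₀))^{n(α₁-1)+1} + Q_{α₂,n}(-log r₀)^{n(α₂-1)+1} ), where Q_{α,n} = α^n/(nα-n+1) and c_{n-1} is the surface measure of S^{n-1}. -/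

import Mathlib

open Real Set MeasureTheory

section norm_deriv
variable {E : Type*} [NormedAddCommGroup E] [InnerProductSpace ℝ E]

lemma hasFDerivAt_norm' {x : E} (hx : x ≠ 0) :
    HasFDerivAt (fun y : E => ‖y‖) (‖x‖⁻¹ • innerSL ℝ x) x := by
  have hx' : (0:ℝ) < ‖x‖ := norm_pos_iff.mpr hx
  have h2 : HasFDerivAt (fun y : E => ‖y‖ ^ (2:ℝ)) (((2:ℝ) * ‖x‖ ^ ((2:ℝ) - 2)) • innerSL ℝ x) x :=
    hasFDerivAt_norm_rpow x one_lt_two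
  have hsq : ‖x‖ ^ (2:ℝ) ≠ 0 := by positivity
  have h := (Real.hasDerivAt_sqrt hsq).comp_hasFDerivAt x h2
  simp only [Function.comp_def] at h
  have heq : (fun y : E => Real.sqrt (‖y‖ ^ (2:ℝ))) = fun y : E => ‖y‖ := by
    funext y
    rw [show (2:ℝ) = ((2:ℕ):ℝ) by norm_num, Real.rpow_natCast, Real.sqrt_sq (norm_nonneg y)]
  rw [heq] at h
  refine h.congr_fderiv (Eq.symm ?_)
  have : Real.sqrt (‖x‖ ^ (2:ℝ)) = ‖x‖ := by
    rw [show (2:ℝ) = ((2:ℕ):ℝ) by norm_num, Real.rpow_natCast, Real.sqrt_sq (norm_nonneg x)]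
  rw [this, smul_smul]
  congr 1
  field_simp
  norm_num

lemma norm_gradient_comp_norm [CompleteSpace E] {g : ℝ → ℝ} {g' : ℝ} {x : E} (hx : x ≠ 0)
    (hg : HasDerivAt g g' ‖x‖) : ‖gradient (fun y : E => g ‖y‖) x‖ = |g'| := by
  have h := hg.comp_hasFDerivAt x (hasFDerivAt_norm' hx)
  simp only [Function.comp_def] at h
  have hx' : (0:ℝ) < ‖x‖ := norm_pos_iff.mpr hx
  have : gradient (fun y : E => g ‖y‖) x
      = (InnerProductSpace.toDual ℝ E).symm (fderiv ℝ (fun y : E => g ‖y‖) x) := rfl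
  rw [this, LinearIsometryEquiv.norm_map, h.fderiv, norm_smul, norm_smul, innerSL_apply_norm,
    Real.norm_eq_abs, Real.norm_eq_abs, abs_inv, abs_of_pos hx']
  field_simp

end norm_deriv

section sign

variable {α₁ α₂ : ℝ}

lemma hasDerivAt_H (hα₁ : 1 < α₁) {s : ℝ} (hs : s ∈ Ioo (0:ℝ) 1) :
    HasDerivAt (fun s : ℝ => 1 - (1-s)^α₂ - s^α₁)
      (α₂ * (1-s)^(α₂ - 1) - α₁ * s^(α₁ - 1)) s := by
  have h1 : HasDerivAt (fun s : ℝ => (1-s)^α₂) (-(α₂ * (1-s)^(α₂-1))) s := by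
    have h0 : (1:ℝ) - s ≠ 0 := by have := hs.2; intro h; nlinarith
    have := (Real.hasDerivAt_rpow_const (x := 1-s) (p := α₂) (Or.inl h0)).comp s
      ((hasDerivAt_const s (1:ℝ)).sub (hasDerivAt_id s))
    simp only [Function.comp_def] at this
    refine this.congr_deriv (Eq.symm ?_)
    simp
  have h2 : HasDerivAt (fun s : ℝ => s^α₁) (α₁ * s^(α₁-1)) s := by
    simpa using Real.hasDerivAt_rpow_const (x := s) (p := α₁) (Or.inl (ne_of_gt hs.1))
  have := ((hasDerivAt_const s (1:ℝ)).sub h1).sub h2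
  refine this.congr_deriv (Eq.symm ?_)
  ring

lemma continuousOn_H (hα₂0 : 0 < α₂) (hα₁ : 1 < α₁) :
    ContinuousOn (fun s : ℝ => 1 - (1-s)^α₂ - s^α₁) (Icc (0:ℝ) 1) := by
  apply ContinuousOn.sub
  · apply ContinuousOn.sub continuousOn_const
    exact (continuousOn_const.sub continuousOn_id).rpow_const
      (fun x _ => Or.inr hα₂0.le)
  · exact continuousOn_id.rpow_const (fun x _ => Or.inr (by linarith))

lemma convex_T (hα₂0 : 0 < α₂) (hα₂1 : α₂ < 1) (hα₁ : 1 < α₁) :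
    Convex ℝ {s ∈ Ioo (0:ℝ) 1 |
      (Real.log α₂ + (α₂ - 1) * Real.log (1 - s))
        - (Real.log α₁ + (α₁ - 1) * Real.log s) ≤ 0} := by
  apply ConvexOn.convex_le
  have hneg : ConvexOn ℝ (Ioi (0:ℝ)) (fun x : ℝ => -Real.log x) :=
    strictConcaveOn_log_Ioi.concaveOn.neg
  have h1 : ConvexOn ℝ (Ioo (0:ℝ) 1) (fun s : ℝ => (α₁ - 1) * (-Real.log s)) :=
    (hneg.subset (fun x hx => hx.1) (convex_Ioo 0 1)).smul (by linarith)
  have h2 : ConvexOn ℝ (Ioo (0:ℝ) 1) (fun s : ℝ => (1 - α₂) * (-Real.log (1 - s))) := by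
    have h2' := hneg.comp_affineMap (AffineMap.lineMap (1:ℝ) (0:ℝ))
    have hl : ∀ s : ℝ, (AffineMap.lineMap (1:ℝ) (0:ℝ)) s = 1 - s := by
      intro s
      simp [AffineMap.lineMap_apply]
      ring
    have heqf : ((fun x : ℝ => -Real.log x) ∘ (AffineMap.lineMap (1:ℝ) (0:ℝ)))
        = fun s : ℝ => -Real.log (1 - s) := by
      ext s
      simp only [Function.comp_apply, hl]
    rw [heqf] at h2'
    have hsub : Ioo (0:ℝ) 1 ⊆ (AffineMap.lineMap (1:ℝ) (0:ℝ)) ⁻¹' (Ioi 0) := by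
      intro x hx
      simp only [mem_preimage, hl, mem_Ioi]
      linarith [hx.2]
    exact (h2'.subset hsub (convex_Ioo 0 1)).smul (by linarith)
  have hsum := (convexOn_const (c := Real.log α₂ - Real.log α₁) (convex_Ioo (0:ℝ) 1)).add (h2.add h1)
  refine cast (congrArg (ConvexOn ℝ (Ioo (0:ℝ) 1)) ?_) hsum
  ext s
  simp only [Pi.add_apply]
  ring

lemma sign_H (hα₂0 : 0 < α₂) (hα₂1 : α₂ < 1) (hα₁ : 1 < α₁)
    {s₀ : ℝ} (hs₀ : s₀ ∈ Ioo (0:ℝ) 1)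
    (h0 : 1 - (1-s₀)^α₂ - s₀^α₁ = 0) :
    (∀ s ∈ Icc (0:ℝ) s₀, 0 ≤ 1 - (1-s)^α₂ - s^α₁) ∧
    (∀ s ∈ Icc s₀ (1:ℝ), 1 - (1-s)^α₂ - s^α₁ ≤ 0) := by
  set H : ℝ → ℝ := fun s => 1 - (1-s)^α₂ - s^α₁ with hH
  set H' : ℝ → ℝ := fun s => α₂ * (1-s)^(α₂-1) - α₁ * s^(α₁-1) with hH'
  set φ : ℝ → ℝ := fun s => (Real.log α₂ + (α₂ - 1) * Real.log (1 - s))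
        - (Real.log α₁ + (α₁ - 1) * Real.log s) with hφ
  have hTc : Convex ℝ {s ∈ Ioo (0:ℝ) 1 | φ s ≤ 0} := convex_T hα₂0 hα₂1 hα₁
  have hTo := hTc.ordConnected
  have hα₁0 : (0:ℝ) < α₁ := by linarith
  have hH0 : H 0 = 0 := by
    simp [hH, Real.one_rpow, Real.zero_rpow (ne_of_gt hα₁0)]
  have hH1 : H 1 = 0 := by
    simp [hH, Real.zero_rpow (ne_of_gt hα₂0), Real.one_rpow]
  have hHs₀ : H s₀ = 0 := h0
  have hder : ∀ s ∈ Ioo (0:ℝ) 1, HasDerivAt H (H' s) s := fun s hs => hasDerivAt_H hα₁ hs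
  have hcont : ContinuousOn H (Icc 0 1) := continuousOn_H hα₂0 hα₁
  have hsign : ∀ s ∈ Ioo (0:ℝ) 1, (H' s ≤ 0 ↔ φ s ≤ 0) := by
    intro s hs
    have h1s : 0 < 1 - s := by linarith [hs.2]
    have hs0 : 0 < s := hs.1
    have ha : 0 < α₂ * (1-s)^(α₂-1) := by positivity
    have hb : 0 < α₁ * s^(α₁-1) := by positivity
    have hla : Real.log (α₂ * (1-s)^(α₂-1)) = Real.log α₂ + (α₂-1) * Real.log (1-s) := by
      rw [Real.log_mul (ne_of_gt hα₂0) (by positivity), Real.log_rpow h1s]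
    have hlb : Real.log (α₁ * s^(α₁-1)) = Real.log α₁ + (α₁-1) * Real.log s := by
      rw [Real.log_mul (ne_of_gt hα₁0) (by positivity), Real.log_rpow hs0]
    rw [hH', hφ, sub_nonpos, sub_nonpos, ← hla, ← hlb, Real.log_le_log_iff ha hb]
  -- Claim A
  have claimA : ∀ c ∈ Ioo (0:ℝ) s₀, 0 ≤ H c := by
    by_contra hcon
    push_neg at hcon
    obtain ⟨c, hc1, hcneg⟩ := hcon
    have hcI : c ∈ Ioo (0:ℝ) 1 := ⟨hc1.1, lt_trans hc1.2 hs₀.2⟩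
    obtain ⟨p, hp, hpv⟩ := exists_hasDerivAt_eq_slope H H' hc1.1
      (hcont.mono (Icc_subset_Icc le_rfl (le_of_lt hcI.2)))
      (fun x hx => hder x ⟨hx.1, lt_trans hx.2 hcI.2⟩)
    have hp' : H' p < 0 := by
      rw [hpv, hH0]
      apply div_neg_of_neg_of_pos <;> [skip; skip] <;> simp only [sub_zero] <;>
        [exact hcneg; exact hc1.1]
    have hpI : p ∈ Ioo (0:ℝ) 1 := ⟨hp.1, lt_trans hp.2 hcI.2⟩
    have hpT : p ∈ {s ∈ Ioo (0:ℝ) 1 | φ s ≤ 0} := ⟨hpI, (hsign p hpI).1 (le_of_lt hp')⟩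
    obtain ⟨q, hq, hqv⟩ := exists_hasDerivAt_eq_slope H H' hc1.2
      (hcont.mono (Icc_subset_Icc (le_of_lt hcI.1) (le_of_lt hs₀.2)))
      (fun x hx => hder x ⟨lt_trans hcI.1 hx.1, lt_trans hx.2 hs₀.2⟩)
    have hq' : 0 < H' q := by
      rw [hqv, hHs₀]
      apply div_pos <;> [linarith; linarith [hc1.2]]
    have hqI : q ∈ Ioo (0:ℝ) 1 := ⟨lt_trans hcI.1 hq.1, lt_trans hq.2 hs₀.2⟩
    have hpos : ∀ x ∈ Ioo q 1, 0 < H' x := by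
      intro x hx
      by_contra hx0
      push_neg at hx0
      have hxI : x ∈ Ioo (0:ℝ) 1 := ⟨lt_trans hqI.1 hx.1, hx.2⟩
      have hxT : x ∈ {s ∈ Ioo (0:ℝ) 1 | φ s ≤ 0} := ⟨hxI, (hsign x hxI).1 hx0⟩
      have hqT : q ∈ {s ∈ Ioo (0:ℝ) 1 | φ s ≤ 0} :=
        hTo.out hpT hxT ⟨by linarith [hp.2, hq.1], le_of_lt hx.1⟩
      have : H' q ≤ 0 := (hsign q hqI).2 hqT.2
      linarith
    have hq1 : q ≤ 1 := le_of_lt hqI.2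
    have hmono : StrictMonoOn H (Icc q 1) := by
      apply strictMonoOn_of_deriv_pos (convex_Icc q 1)
        (hcont.mono (Icc_subset_Icc (le_of_lt hqI.1) le_rfl))
      intro x hx
      rw [interior_Icc] at hx
      rw [(hder x ⟨lt_trans hqI.1 hx.1, hx.2⟩).deriv]
      exact hpos x hx
    have hlt : H s₀ < H 1 :=
      hmono ⟨le_of_lt hq.2, le_of_lt hs₀.2⟩ ⟨hq1, le_rfl⟩ hs₀.2
    rw [hHs₀, hH1] at hlt
    exact lt_irrefl 0 hlt
  -- Claim B
  have claimB : ∀ c ∈ Ioo s₀ (1:ℝ), H c ≤ 0 := by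
    by_contra hcon
    push_neg at hcon
    obtain ⟨c, hc1, hcpos⟩ := hcon
    have hcI : c ∈ Ioo (0:ℝ) 1 := ⟨lt_trans hs₀.1 hc1.1, hc1.2⟩
    obtain ⟨q, hq, hqv⟩ := exists_hasDerivAt_eq_slope H H' hc1.1
      (hcont.mono (Icc_subset_Icc (le_of_lt hs₀.1) (le_of_lt hcI.2)))
      (fun x hx => hder x ⟨lt_trans hs₀.1 hx.1, lt_trans hx.2 hcI.2⟩)
    have hq' : 0 < H' q := by
      rw [hqv, hHs₀]
      apply div_pos <;> [linarith; linarith [hc1.1]]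
    have hqI : q ∈ Ioo (0:ℝ) 1 := ⟨lt_trans hs₀.1 hq.1, lt_trans hq.2 hcI.2⟩
    obtain ⟨t, ht, htv⟩ := exists_hasDerivAt_eq_slope H H' hc1.2
      (hcont.mono (Icc_subset_Icc (le_of_lt hcI.1) le_rfl))
      (fun x hx => hder x ⟨lt_trans hcI.1 hx.1, hx.2⟩)
    have ht' : H' t < 0 := by
      rw [htv, hH1]
      apply div_neg_of_neg_of_pos <;> [linarith; linarith [hc1.2]]
    have htI : t ∈ Ioo (0:ℝ) 1 := ⟨lt_trans hcI.1 ht.1, ht.2⟩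
    have htT : t ∈ {s ∈ Ioo (0:ℝ) 1 | φ s ≤ 0} := ⟨htI, (hsign t htI).1 (le_of_lt ht')⟩
    have hpos : ∀ x ∈ Ioo (0:ℝ) q, 0 < H' x := by
      intro x hx
      by_contra hx0
      push_neg at hx0
      have hxI : x ∈ Ioo (0:ℝ) 1 := ⟨hx.1, lt_trans hx.2 hqI.2⟩
      have hxT : x ∈ {s ∈ Ioo (0:ℝ) 1 | φ s ≤ 0} := ⟨hxI, (hsign x hxI).1 hx0⟩
      have hqT : q ∈ {s ∈ Ioo (0:ℝ) 1 | φ s ≤ 0} :=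
        hTo.out hxT htT ⟨le_of_lt hx.2, by linarith [hq.2, ht.1]⟩
      have : H' q ≤ 0 := (hsign q hqI).2 hqT.2
      linarith
    have hmono : StrictMonoOn H (Icc 0 q) := by
      apply strictMonoOn_of_deriv_pos (convex_Icc 0 q)
        (hcont.mono (Icc_subset_Icc le_rfl (le_of_lt hqI.2)))
      intro x hx
      rw [interior_Icc] at hx
      rw [(hder x ⟨hx.1, lt_trans hx.2 hqI.2⟩).deriv]
      exact hpos x hx
    have hlt : H 0 < H s₀ :=
      hmono ⟨le_rfl, le_of_lt (lt_trans hs₀.1 hq.1)⟩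
        ⟨le_of_lt hs₀.1, le_of_lt hq.1⟩ hs₀.1
    rw [hHs₀, hH0] at hlt
    exact lt_irrefl 0 hlt
  constructor
  · intro s hs
    rcases eq_or_lt_of_le hs.1 with h | h
    · subst h; exact le_of_eq hH0.symm
    · rcases eq_or_lt_of_le hs.2 with h2 | h2
      · subst h2; exact le_of_eq hHs₀.symm
      · exact claimA s ⟨h, h2⟩
  · intro s hs
    rcases eq_or_lt_of_le hs.1 with h | h
    · subst h; exact le_of_eq hHs₀
    · rcases eq_or_lt_of_le hs.2 with h2 | h2
      · subst h2; exact le_of_eq hH1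
      · exact claimB s ⟨h, h2⟩

end sign

section derivs

lemma hasDerivAt_log_emul {r : ℝ} (hr : 0 < r) :
    HasDerivAt (fun t : ℝ => Real.log (Real.exp 1 * t)) r⁻¹ r := by
  have h := (Real.hasDerivAt_log (by positivity : Real.exp 1 * r ≠ 0)).comp r
    ((hasDerivAt_id r).const_mul (Real.exp 1))
  simp only [Function.comp_def] at h
  refine h.congr_deriv (Eq.symm ?_)
  rw [mul_one]
  field_simp

lemma one_lt_emul {r : ℝ} (hr : 1 / Real.exp 1 < r) : 1 < Real.exp 1 * r := by
  have he : (0:ℝ) < Real.exp 1 := Real.exp_pos 1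
  rw [div_lt_iff₀ he] at hr
  linarith [hr]

lemma hasDerivAt_pow_log {α r : ℝ} (hr : 1 / Real.exp 1 < r) :
    HasDerivAt (fun t : ℝ => Real.log (Real.exp 1 * t) ^ α)
      (α * Real.log (Real.exp 1 * r) ^ (α - 1) / r) r := by
  have he : (0:ℝ) < Real.exp 1 := Real.exp_pos 1
  have hr0 : 0 < r := lt_trans (by positivity) hr
  have hbase : 0 < Real.log (Real.exp 1 * r) := Real.log_pos (one_lt_emul hr)
  have h := (Real.hasDerivAt_rpow_const (x := Real.log (Real.exp 1 * r)) (p := α)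
    (Or.inl (ne_of_gt hbase))).comp r (hasDerivAt_log_emul hr0)
  simp only [Function.comp_def] at h
  exact h

lemma hasDerivAt_pow_neg_log {α r : ℝ} (hr0 : 0 < r) (hr1 : r < 1) :
    HasDerivAt (fun t : ℝ => (-Real.log t) ^ α)
      (-(α * (-Real.log r) ^ (α - 1) / r)) r := by
  have hbase : 0 < -Real.log r := by have := Real.log_neg hr0 hr1; linarith
  have h := (Real.hasDerivAt_rpow_const (x := -Real.log r) (p := α)
    (Or.inl (ne_of_gt hbase))).comp r (Real.hasDerivAt_log (ne_of_gt hr0)).neg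
  simp only [Function.comp_def] at h
  refine h.congr_deriv (Eq.symm ?_)
  ring

end derivs

set_option maxHeartbeats 1600000 in
theorem energy_of_min_on_annulus (n : ℕ) (hn : 2 ≤ n) (α₁ α₂ : ℝ)
    (hα₂ : 1 - 1 / (n : ℝ) < α₂) (hα₂1 : α₂ < 1) (hα₁ : 1 < α₁)
    (u₁ u₂ : EuclideanSpace ℝ (Fin n) → ℝ)
    (hu₁ : u₁ = fun x => Real.log (Real.exp 1 * ‖x‖) ^ α₁)
    (hu₂ : u₂ = fun x => 1 - (-Real.log ‖x‖) ^ α₂)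
    (r₀ : ℝ) (hr₀ : r₀ ∈ Ioo (1 / Real.exp 1) 1)
    (heq : 1 = (-Real.log r₀) ^ α₂ + Real.log (Real.exp 1 * r₀) ^ α₁) :
    ∫ x in {x : EuclideanSpace ℝ (Fin n) | 1 / Real.exp 1 < ‖x‖ ∧ ‖x‖ < 1},
        ‖gradient (fun y => min (u₁ y) (u₂ y)) x‖ ^ n
      = (n : ℝ) * (volume (Metric.ball (0 : EuclideanSpace ℝ (Fin n)) 1)).toReal
        * (α₁ ^ n / (n * α₁ - n + 1) * Real.log (Real.exp 1 * r₀) ^ (n * (α₁ - 1) + 1)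
          + α₂ ^ n / (n * α₂ - n + 1) * (-Real.log r₀) ^ (n * (α₂ - 1) + 1)) := by
  classical
  have he : (0:ℝ) < Real.exp 1 := Real.exp_pos 1
  obtain ⟨hr₀1, hr₀2⟩ := hr₀
  have hr₀0 : (0:ℝ) < r₀ := lt_trans (by positivity) hr₀1
  have hnpos : (0:ℝ) < (n:ℝ) := by positivity
  have hα₂0 : (0:ℝ) < α₂ := by
    have h1 : 1/(n:ℝ) ≤ 1 := by
      rw [div_le_one hnpos]; exact_mod_cast Nat.one_le_of_lt hn
    linarith
  have hα₁0 : (0:ℝ) < α₁ := by linarith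
  have hβ₁ : (0:ℝ) < (n:ℝ) * (α₁ - 1) + 1 := by nlinarith
  have hβ₂ : (0:ℝ) < (n:ℝ) * (α₂ - 1) + 1 := by
    have : (n:ℝ) * (1/(n:ℝ)) = 1 := by field_simp
    nlinarith
  have hlogr₀ : Real.log (Real.exp 1 * r₀) = 1 + Real.log r₀ := by
    rw [Real.log_mul (Real.exp_ne_zero 1) (ne_of_gt hr₀0), Real.log_exp]
  set s₀ := Real.log (Real.exp 1 * r₀) with hs₀def
  have hneglog : -Real.log r₀ = 1 - s₀ := by rw [hlogr₀]; ring
  have hs₀mem : s₀ ∈ Ioo (0:ℝ) 1 := by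
    constructor
    · exact Real.log_pos (one_lt_emul hr₀1)
    · rw [hlogr₀]; have := Real.log_neg hr₀0 hr₀2; linarith
  have hH0 : 1 - (1-s₀)^α₂ - s₀^α₁ = 0 := by
    rw [hneglog] at heq; linarith
  obtain ⟨hsA, hsB⟩ := sign_H hα₂0 hα₂1 hα₁ hs₀mem hH0
  -- ordering of u₁, u₂
  have key1 : ∀ y : EuclideanSpace ℝ (Fin n), 1/Real.exp 1 < ‖y‖ → ‖y‖ ≤ r₀ → u₁ y ≤ u₂ y := by
    intro y hy1 hy2
    have hy0 : (0:ℝ) < ‖y‖ := lt_trans (by positivity) hy1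
    have h1s : 1 - Real.log (Real.exp 1 * ‖y‖) = -Real.log ‖y‖ := by
      rw [Real.log_mul (Real.exp_ne_zero 1) (ne_of_gt hy0), Real.log_exp]; ring
    have hsmem : Real.log (Real.exp 1 * ‖y‖) ∈ Icc 0 s₀ := by
      constructor
      · exact le_of_lt (Real.log_pos (one_lt_emul hy1))
      · rw [hs₀def]
        apply Real.log_le_log (by positivity)
        nlinarith
    have hs := hsA _ hsmem
    rw [h1s] at hs
    rw [hu₁, hu₂]
    simp only
    linarith
  have key2 : ∀ y : EuclideanSpace ℝ (Fin n), r₀ ≤ ‖y‖ → ‖y‖ < 1 → u₂ y ≤ u₁ y := by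
    intro y hy1 hy2
    have hy0 : (0:ℝ) < ‖y‖ := lt_of_lt_of_le hr₀0 hy1
    have h1s : 1 - Real.log (Real.exp 1 * ‖y‖) = -Real.log ‖y‖ := by
      rw [Real.log_mul (Real.exp_ne_zero 1) (ne_of_gt hy0), Real.log_exp]; ring
    have hsmem : Real.log (Real.exp 1 * ‖y‖) ∈ Icc s₀ 1 := by
      constructor
      · rw [hs₀def]
        apply Real.log_le_log (by positivity)
        nlinarith
      · calc Real.log (Real.exp 1 * ‖y‖) ≤ Real.log (Real.exp 1 * 1) := by
              apply Real.log_le_log (by positivity); nlinarith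
          _ = 1 := by rw [mul_one, Real.log_exp]
    have hs := hsB _ hsmem
    rw [h1s] at hs
    rw [hu₁, hu₂]
    simp only
    linarith
  -- the radial profile of the squared gradient
  set g1' : ℝ → ℝ := fun r => α₁ * Real.log (Real.exp 1 * r) ^ (α₁ - 1) / r with hg1'def
  set g2' : ℝ → ℝ := fun r => α₂ * (-Real.log r) ^ (α₂ - 1) / r with hg2'def
  set G : ℝ → ℝ := fun r => if 1/Real.exp 1 < r ∧ r < r₀ then (g1' r)^n
      else if r₀ < r ∧ r < 1 then (g2' r)^n else 0 with hGdef
  haveI : Nonempty (Fin n) := ⟨⟨0, by omega⟩⟩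
  haveI hnt : Nontrivial (EuclideanSpace ℝ (Fin n)) := inferInstance
  -- pointwise identification of the gradient, away from the sphere of radius r₀
  have hgrad : ∀ x : EuclideanSpace ℝ (Fin n),
      (1/Real.exp 1 < ‖x‖ ∧ ‖x‖ < 1) → ‖x‖ ≠ r₀ →
      ‖gradient (fun y => min (u₁ y) (u₂ y)) x‖ ^ n = G ‖x‖ := by
    intro x hx hxr
    have hx0' : (0:ℝ) < ‖x‖ := lt_trans (by positivity) hx.1
    have hx0 : x ≠ 0 := by
      intro h
      rw [h, norm_zero] at hx0'
      exact lt_irrefl 0 hx0'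
    rcases lt_or_gt_of_ne hxr with hlt | hgt
    · -- region where the min is u₁
      have hU : IsOpen {y : EuclideanSpace ℝ (Fin n) | 1/Real.exp 1 < ‖y‖ ∧ ‖y‖ < r₀} := by
        have : {y : EuclideanSpace ℝ (Fin n) | 1/Real.exp 1 < ‖y‖ ∧ ‖y‖ < r₀}
            = (fun y : EuclideanSpace ℝ (Fin n) => ‖y‖) ⁻¹' (Ioo (1/Real.exp 1) r₀) := rfl
        rw [this]
        exact isOpen_Ioo.preimage continuous_norm
      have hev : (fun y => min (u₁ y) (u₂ y)) =ᶠ[nhds x] u₁ := by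
        filter_upwards [hU.mem_nhds ⟨hx.1, hlt⟩] with y hy
        exact min_eq_left (key1 y hy.1 (le_of_lt hy.2))
      rw [hev.gradient_eq, hu₁]
      have hd : HasDerivAt (fun t : ℝ => Real.log (Real.exp 1 * t) ^ α₁) (g1' ‖x‖) ‖x‖ :=
        hasDerivAt_pow_log hx.1
      rw [norm_gradient_comp_norm hx0 hd]
      have hpos : (0:ℝ) ≤ g1' ‖x‖ := by
        rw [hg1'def]
        apply div_nonneg _ (le_of_lt hx0')
        exact mul_nonneg (le_of_lt hα₁0)
          (Real.rpow_nonneg (le_of_lt (Real.log_pos (one_lt_emul hx.1))) _)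
      rw [abs_of_nonneg hpos, hGdef]
      simp only
      rw [if_pos ⟨hx.1, hlt⟩]
    · -- region where the min is u₂
      have hU : IsOpen {y : EuclideanSpace ℝ (Fin n) | r₀ < ‖y‖ ∧ ‖y‖ < 1} := by
        have : {y : EuclideanSpace ℝ (Fin n) | r₀ < ‖y‖ ∧ ‖y‖ < 1}
            = (fun y : EuclideanSpace ℝ (Fin n) => ‖y‖) ⁻¹' (Ioo r₀ 1) := rfl
        rw [this]
        exact isOpen_Ioo.preimage continuous_norm
      have hev : (fun y => min (u₁ y) (u₂ y)) =ᶠ[nhds x] u₂ := by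
        filter_upwards [hU.mem_nhds ⟨hgt, hx.2⟩] with y hy
        exact min_eq_right (key2 y (le_of_lt hy.1) hy.2)
      rw [hev.gradient_eq, hu₂]
      have hd : HasDerivAt (fun t : ℝ => 1 - (-Real.log t) ^ α₂) (g2' ‖x‖) ‖x‖ := by
        have := ((hasDerivAt_const (‖x‖) (1:ℝ)).sub
          (hasDerivAt_pow_neg_log (α := α₂) hx0' hx.2))
        refine this.congr_deriv ?_
        simp [hg2'def]
      rw [norm_gradient_comp_norm hx0 hd]
      have hlx : (0:ℝ) < -Real.log ‖x‖ := by
        have := Real.log_neg hx0' hx.2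
        linarith
      have hpos : (0:ℝ) ≤ g2' ‖x‖ := by
        rw [hg2'def]
        apply div_nonneg _ (le_of_lt hx0')
        exact mul_nonneg (le_of_lt hα₂0) (Real.rpow_nonneg (le_of_lt hlx) _)
      rw [abs_of_nonneg hpos, hGdef]
      simp only
      rw [if_neg (by push_neg; intro _; linarith), if_pos ⟨hgt, hx.2⟩]
  -- Step 1+2 : reduce to an integral of a function of the norm over all space
  have step12 : ∫ x in {x : EuclideanSpace ℝ (Fin n) | 1 / Real.exp 1 < ‖x‖ ∧ ‖x‖ < 1},
      ‖gradient (fun y => min (u₁ y) (u₂ y)) x‖ ^ n = ∫ x : EuclideanSpace ℝ (Fin n), G ‖x‖ := by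
    have hSopen : IsOpen {x : EuclideanSpace ℝ (Fin n) | 1 / Real.exp 1 < ‖x‖ ∧ ‖x‖ < 1} := by
      have : {x : EuclideanSpace ℝ (Fin n) | 1 / Real.exp 1 < ‖x‖ ∧ ‖x‖ < 1}
          = (fun y : EuclideanSpace ℝ (Fin n) => ‖y‖) ⁻¹' (Ioo (1/Real.exp 1) 1) := rfl
      rw [this]
      exact isOpen_Ioo.preimage continuous_norm
    have hsphere : ∀ᵐ x : EuclideanSpace ℝ (Fin n) ∂volume, ‖x‖ ≠ r₀ := by
      have h0 : volume (Metric.sphere (0 : EuclideanSpace ℝ (Fin n)) r₀) = 0 :=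
        Measure.addHaar_sphere (μ := (volume : Measure (EuclideanSpace ℝ (Fin n)))) 0 r₀
      rw [ae_iff]
      convert h0 using 2
      ext x
      simp [dist_zero_right]
    have h1 : ∫ x in {x : EuclideanSpace ℝ (Fin n) | 1 / Real.exp 1 < ‖x‖ ∧ ‖x‖ < 1},
        ‖gradient (fun y => min (u₁ y) (u₂ y)) x‖ ^ n
        = ∫ x in {x : EuclideanSpace ℝ (Fin n) | 1 / Real.exp 1 < ‖x‖ ∧ ‖x‖ < 1}, G ‖x‖ := by
      apply integral_congr_ae
      rw [Filter.EventuallyEq, ae_restrict_iff' hSopen.measurableSet]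
      filter_upwards [hsphere] with x hxr hxS
      exact hgrad x hxS hxr
    rw [h1]
    apply setIntegral_eq_integral_of_forall_compl_eq_zero
    intro x hxS
    have hA : ¬(1/Real.exp 1 < ‖x‖ ∧ ‖x‖ < r₀) := by
      rintro ⟨h1', h2'⟩; exact hxS ⟨h1', lt_trans h2' hr₀2⟩
    have hB : ¬(r₀ < ‖x‖ ∧ ‖x‖ < 1) := by
      rintro ⟨h1', h2'⟩; exact hxS ⟨lt_trans hr₀1 h1', h2'⟩
    rw [hGdef]
    simp only
    rw [if_neg hA, if_neg hB]
  -- Step 3 : polar coordinates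
  have step3 : ∫ x : EuclideanSpace ℝ (Fin n), G ‖x‖
      = n • (volume (Metric.ball (0 : EuclideanSpace ℝ (Fin n)) 1)).toReal
        • ∫ y in Ioi (0:ℝ), y ^ (n - 1) • G y := by
    have h := integral_fun_norm_addHaar (volume : Measure (EuclideanSpace ℝ (Fin n))) G
    rwa [finrank_euclideanSpace_fin] at h
  -- Step 4 : compute the one-dimensional integral
  have step4 : ∫ y in Ioi (0:ℝ), y ^ (n - 1) • G y
      = α₁ ^ n / ((n:ℝ) * (α₁ - 1) + 1) * s₀ ^ ((n:ℝ) * (α₁ - 1) + 1)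
        + α₂ ^ n / ((n:ℝ) * (α₂ - 1) + 1) * (-Real.log r₀) ^ ((n:ℝ) * (α₂ - 1) + 1) := by
    simp only [smul_eq_mul]
    set F₁ : ℝ → ℝ := fun y => α₁^n * Real.log (Real.exp 1 * y) ^ ((n:ℝ)*(α₁-1)) / y with hF₁def
    set F₂ : ℝ → ℝ := fun y => α₂^n * (-Real.log y) ^ ((n:ℝ)*(α₂-1)) / y with hF₂def
    have haer : ∀ᵐ y : ℝ ∂volume, y ≠ r₀ := by
      rw [ae_iff]
      convert Real.volume_singleton (a := r₀) using 2
      ext y; simp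
    -- pointwise identities
    have hid1 : ∀ y : ℝ, 1/Real.exp 1 < y → y < r₀ → y ^ (n-1) * (g1' y)^n = F₁ y := by
      intro y hy1 hy2
      have hy0 : (0:ℝ) < y := lt_trans (by positivity) hy1
      have hL : (0:ℝ) ≤ Real.log (Real.exp 1 * y) := le_of_lt (Real.log_pos (one_lt_emul hy1))
      have hyn : y^n = y^(n-1) * y := by
        conv_lhs => rw [show n = (n-1)+1 by omega]
        rw [pow_succ]
      rw [hg1'def, hF₁def]
      simp only
      rw [div_pow, mul_pow,
        ← Real.rpow_natCast (Real.log (Real.exp 1 * y) ^ (α₁ - 1)) n,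
        ← Real.rpow_mul hL, show (α₁-1)*(n:ℝ) = (n:ℝ)*(α₁-1) by ring, hyn]
      have hyne : y ≠ 0 := ne_of_gt hy0
      field_simp
    have hid2 : ∀ y : ℝ, r₀ < y → y < 1 → y ^ (n-1) * (g2' y)^n = F₂ y := by
      intro y hy1 hy2
      have hy0 : (0:ℝ) < y := lt_trans hr₀0 hy1
      have hL : (0:ℝ) ≤ -Real.log y := by have := Real.log_neg hy0 hy2; linarith
      have hyn : y^n = y^(n-1) * y := by
        conv_lhs => rw [show n = (n-1)+1 by omega]
        rw [pow_succ]
      rw [hg2'def, hF₂def]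
      simp only
      rw [div_pow, mul_pow,
        ← Real.rpow_natCast ((-Real.log y) ^ (α₂ - 1)) n,
        ← Real.rpow_mul hL, show (α₂-1)*(n:ℝ) = (n:ℝ)*(α₂-1) by ring, hyn]
      have hyne : y ≠ 0 := ne_of_gt hy0
      field_simp
    -- vanishing outside the annulus
    have hzero : ∀ y : ℝ, y ∉ Ioo (1/Real.exp 1) 1 → y ^ (n-1) * G y = 0 := by
      intro y hy
      have hA : ¬(1/Real.exp 1 < y ∧ y < r₀) := by
        rintro ⟨h1', h2'⟩; exact hy ⟨h1', lt_trans h2' hr₀2⟩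
      have hB : ¬(r₀ < y ∧ y < 1) := by
        rintro ⟨h1', h2'⟩; exact hy ⟨lt_trans hr₀1 h1', h2'⟩
      rw [hGdef]
      simp only
      rw [if_neg hA, if_neg hB, mul_zero]
    have e1 : ∫ y in Ioi (0:ℝ), y ^ (n-1) * G y = ∫ y : ℝ, y ^ (n-1) * G y :=
      setIntegral_eq_integral_of_forall_compl_eq_zero
        (fun y hy => hzero y (fun hmem => hy (lt_trans (by positivity) hmem.1)))
    have e2 : ∫ y : ℝ, y ^ (n-1) * G y = ∫ y in Ioo (1/Real.exp 1) 1, y ^ (n-1) * G y :=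
      (setIntegral_eq_integral_of_forall_compl_eq_zero (fun y hy => hzero y hy)).symm
    -- split the interval of integration at r₀
    have hsplit : Ioo (1/Real.exp 1) 1 = Ioc (1/Real.exp 1) r₀ ∪ Ioo r₀ 1 := by
      ext y
      simp only [mem_Ioo, mem_Ioc, mem_union]
      constructor
      · rintro ⟨h1', h2'⟩
        rcases le_or_gt y r₀ with h | h
        · exact Or.inl ⟨h1', h⟩
        · exact Or.inr ⟨h, h2'⟩
      · rintro (⟨h1', h2'⟩ | ⟨h1', h2'⟩)
        · exact ⟨h1', lt_of_le_of_lt h2' hr₀2⟩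
        · exact ⟨lt_trans hr₀1 h1', h2'⟩
    have hdisj : Disjoint (Ioc (1/Real.exp 1) r₀) (Ioo r₀ 1) := by
      rw [Set.disjoint_left]
      rintro y ⟨_, h2'⟩ ⟨h3', _⟩
      exact absurd h3' (not_lt.mpr h2')
    -- piece 1 : integrability and value
    have hcF₁ : ContinuousOn F₁ (Icc (1/Real.exp 1) r₀) := by
      rw [hF₁def]
      apply ContinuousOn.div
      · apply ContinuousOn.mul continuousOn_const
        apply ContinuousOn.rpow_const
        · apply ContinuousOn.log
          · exact (continuous_const.mul continuous_id).continuousOn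
          · intro y hy
            have : (0:ℝ) < y := lt_of_lt_of_le (by positivity) hy.1
            positivity
        · intro y hy
          exact Or.inr (by nlinarith)
      · exact continuousOn_id
      · intro y hy
        exact ne_of_gt (lt_of_lt_of_le (by positivity) hy.1)
    have hiF₁ : IntegrableOn F₁ (Ioc (1/Real.exp 1) r₀) :=
      (hcF₁.integrableOn_compact isCompact_Icc).mono_set Ioc_subset_Icc_self
    have haeG₁ : (fun y => y ^ (n-1) * G y) =ᵐ[volume.restrict (Ioc (1/Real.exp 1) r₀)] F₁ := by
      filter_upwards [ae_restrict_of_ae haer, ae_restrict_mem measurableSet_Ioc] with y h1' h2'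
      have hlt : y < r₀ := lt_of_le_of_ne h2'.2 h1'
      rw [hGdef]
      simp only
      rw [if_pos ⟨h2'.1, hlt⟩]
      exact hid1 y h2'.1 hlt
    have hiP₁ : IntegrableOn (fun y => y ^ (n-1) * G y) (Ioc (1/Real.exp 1) r₀) :=
      hiF₁.congr haeG₁.symm
    have hvP₁ : ∫ y in Ioc (1/Real.exp 1) r₀, y ^ (n-1) * G y
        = ∫ y in Ioc (1/Real.exp 1) r₀, F₁ y := integral_congr_ae haeG₁
    -- piece 2 : integrability and value
    have hcF₂ : ContinuousOn F₂ (Ioo r₀ 1) := by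
      rw [hF₂def]
      apply ContinuousOn.div
      · apply ContinuousOn.mul continuousOn_const
        apply ContinuousOn.rpow_const
        · apply ContinuousOn.neg
          apply ContinuousOn.log continuousOn_id
          intro y hy
          exact ne_of_gt (lt_trans hr₀0 hy.1)
        · intro y hy
          have := Real.log_neg (lt_trans hr₀0 hy.1) hy.2
          exact Or.inl (by linarith)
      · exact continuousOn_id
      · intro y hy
        exact ne_of_gt (lt_trans hr₀0 hy.1)
    have hmajInt : IntegrableOn (fun y : ℝ => α₂^n * (1-y) ^ ((n:ℝ)*(α₂-1)) / r₀) (Ioo r₀ 1) := by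
      have hb : IntervalIntegrable (fun x : ℝ => x ^ ((n:ℝ)*(α₂-1))) volume (1-r₀) (1-1) := by
        apply intervalIntegral.intervalIntegrable_rpow'
        linarith
      have hc := hb.comp_sub_left 1
      simp only [sub_sub_cancel] at hc
      have hd := (hc.const_mul (α₂^n)).div_const r₀
      rw [intervalIntegrable_iff, uIoc_of_le (le_of_lt hr₀2)] at hd
      exact hd.mono_set Ioo_subset_Ioc_self
    have hiF₂ : IntegrableOn F₂ (Ioo r₀ 1) := by
      refine Integrable.mono hmajInt (hcF₂.aestronglyMeasurable measurableSet_Ioo) ?_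
      filter_upwards [ae_restrict_mem measurableSet_Ioo] with y hy
      have hy0 : (0:ℝ) < y := lt_trans hr₀0 hy.1
      have h1y : (0:ℝ) < 1 - y := by linarith [hy.2]
      have hL : (0:ℝ) < -Real.log y := by have := Real.log_neg hy0 hy.2; linarith
      have hLy : 1 - y ≤ -Real.log y := by
        have := Real.log_le_sub_one_of_pos hy0
        linarith
      have hrpow : (-Real.log y) ^ ((n:ℝ)*(α₂-1)) ≤ (1-y) ^ ((n:ℝ)*(α₂-1)) := by
        apply Real.rpow_le_rpow_of_nonpos h1y hLy
        nlinarith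
      have hF₂nn : 0 ≤ F₂ y := by
        rw [hF₂def]
        apply div_nonneg _ (le_of_lt hy0)
        exact mul_nonneg (by positivity) (Real.rpow_nonneg (le_of_lt hL) _)
      have hmajnn : 0 ≤ α₂^n * (1-y) ^ ((n:ℝ)*(α₂-1)) / r₀ := by
        apply div_nonneg _ (le_of_lt hr₀0)
        exact mul_nonneg (by positivity) (Real.rpow_nonneg (le_of_lt h1y) _)
      rw [Real.norm_eq_abs, Real.norm_eq_abs, abs_of_nonneg hF₂nn, abs_of_nonneg hmajnn]
      rw [hF₂def]
      simp only
      calc α₂^n * (-Real.log y) ^ ((n:ℝ)*(α₂-1)) / y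
          ≤ α₂^n * (1-y) ^ ((n:ℝ)*(α₂-1)) / y := by gcongr
        _ ≤ α₂^n * (1-y) ^ ((n:ℝ)*(α₂-1)) / r₀ := by
            gcongr
            exact le_of_lt hy.1
    have heq2 : EqOn (fun y => y ^ (n-1) * G y) F₂ (Ioo r₀ 1) := by
      intro y hy
      have hA : ¬(1/Real.exp 1 < y ∧ y < r₀) := by
        rintro ⟨_, h2'⟩
        exact absurd hy.1 (not_lt.mpr (le_of_lt h2'))
      rw [hGdef]
      simp only
      rw [if_neg hA, if_pos ⟨hy.1, hy.2⟩]
      exact hid2 y hy.1 hy.2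
    have hiP₂ : IntegrableOn (fun y => y ^ (n-1) * G y) (Ioo r₀ 1) :=
      hiF₂.congr_fun heq2.symm measurableSet_Ioo
    have hvP₂ : ∫ y in Ioo r₀ 1, y ^ (n-1) * G y = ∫ y in Ioo r₀ 1, F₂ y :=
      setIntegral_congr_fun measurableSet_Ioo heq2
    rw [e1, e2, hsplit, setIntegral_union hdisj measurableSet_Ioo hiP₁ hiP₂, hvP₁, hvP₂]
    -- FTC on the first piece
    have hΦ₁cont : ContinuousOn (fun t : ℝ =>
        α₁^n/((n:ℝ)*(α₁-1)+1) * Real.log (Real.exp 1 * t) ^ ((n:ℝ)*(α₁-1)+1))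
        (Icc (1/Real.exp 1) r₀) := by
      apply ContinuousOn.mul continuousOn_const
      apply ContinuousOn.rpow_const
      · apply ContinuousOn.log
        · exact (continuous_const.mul continuous_id).continuousOn
        · intro y hy
          have : (0:ℝ) < y := lt_of_lt_of_le (by positivity) hy.1
          positivity
      · intro y hy
        exact Or.inr (le_of_lt hβ₁)
    have hAD₁ : ∀ y ∈ Ioo (1/Real.exp 1) r₀, HasDerivAt (fun t : ℝ =>
        α₁^n/((n:ℝ)*(α₁-1)+1) * Real.log (Real.exp 1 * t) ^ ((n:ℝ)*(α₁-1)+1)) (F₁ y) y := by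
      intro y hy
      have h := (hasDerivAt_pow_log (α := (n:ℝ)*(α₁-1)+1) hy.1).const_mul
        (α₁^n/((n:ℝ)*(α₁-1)+1))
      refine h.congr_deriv (Eq.symm ?_)
      rw [hF₁def]
      simp only
      rw [show (n:ℝ)*(α₁-1)+1-1 = (n:ℝ)*(α₁-1) by ring]
      have hy0 : (0:ℝ) < y := lt_trans (by positivity) hy.1
      have hyne : y ≠ 0 := ne_of_gt hy0
      field_simp
    have hint₁ : IntervalIntegrable F₁ volume (1/Real.exp 1) r₀ := by
      rw [intervalIntegrable_iff, uIoc_of_le (le_of_lt hr₀1)]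
      exact hiF₁
    have hI₁ : ∫ y in Ioc (1/Real.exp 1) r₀, F₁ y
        = α₁^n/((n:ℝ)*(α₁-1)+1) * s₀ ^ ((n:ℝ)*(α₁-1)+1) := by
      rw [← intervalIntegral.integral_of_le (le_of_lt hr₀1),
        intervalIntegral.integral_eq_sub_of_hasDerivAt_of_le (le_of_lt hr₀1) hΦ₁cont hAD₁ hint₁,
        show Real.exp 1 * (1/Real.exp 1) = 1 by field_simp, Real.log_one,
        Real.zero_rpow (ne_of_gt hβ₁), mul_zero, sub_zero, hs₀def]
    -- FTC on the second piece
    have hΦ₂cont : ContinuousOn (fun t : ℝ =>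
        -(α₂^n/((n:ℝ)*(α₂-1)+1)) * (-Real.log t) ^ ((n:ℝ)*(α₂-1)+1)) (Icc r₀ 1) := by
      apply ContinuousOn.mul continuousOn_const
      apply ContinuousOn.rpow_const
      · apply ContinuousOn.neg
        apply ContinuousOn.log continuousOn_id
        intro y hy
        exact ne_of_gt (lt_of_lt_of_le hr₀0 hy.1)
      · intro y hy
        exact Or.inr (le_of_lt hβ₂)
    have hAD₂ : ∀ y ∈ Ioo r₀ 1, HasDerivAt (fun t : ℝ =>
        -(α₂^n/((n:ℝ)*(α₂-1)+1)) * (-Real.log t) ^ ((n:ℝ)*(α₂-1)+1)) (F₂ y) y := by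
      intro y hy
      have hy0 : (0:ℝ) < y := lt_trans hr₀0 hy.1
      have h := (hasDerivAt_pow_neg_log (α := (n:ℝ)*(α₂-1)+1) hy0 hy.2).const_mul
        (-(α₂^n/((n:ℝ)*(α₂-1)+1)))
      refine h.congr_deriv (Eq.symm ?_)
      rw [hF₂def]
      simp only
      rw [show (n:ℝ)*(α₂-1)+1-1 = (n:ℝ)*(α₂-1) by ring]
      have hyne : y ≠ 0 := ne_of_gt hy0
      field_simp
    have hint₂ : IntervalIntegrable F₂ volume r₀ 1 := by
      rw [intervalIntegrable_iff, uIoc_of_le (le_of_lt hr₀2)]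
      exact hiF₂.congr_set_ae Ioo_ae_eq_Ioc.symm
    have hI₂ : ∫ y in Ioo r₀ 1, F₂ y
        = α₂^n/((n:ℝ)*(α₂-1)+1) * (-Real.log r₀) ^ ((n:ℝ)*(α₂-1)+1) := by
      rw [← integral_Ioc_eq_integral_Ioo, ← intervalIntegral.integral_of_le (le_of_lt hr₀2),
        intervalIntegral.integral_eq_sub_of_hasDerivAt_of_le (le_of_lt hr₀2) hΦ₂cont hAD₂ hint₂,
        Real.log_one, neg_zero, Real.zero_rpow (ne_of_gt hβ₂), mul_zero, zero_sub]
      ring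
    rw [hI₁, hI₂]
  rw [step12, step3, step4, nsmul_eq_mul, smul_eq_mul]
  ring_nf
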